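/- Fix h₀ ∈ [0,1). If r* > 0 and c* ∈ (0, e^{-1/2}) are such that (h₀, h₀ + r*) is a good pair with respect to c*, then for every 0 < r < r* there exists c ∈ (0, e^{-1/2}) such that (h₀, h₀ + r) is a good pair with respect to c. -/

import Mathlib

open Real

/-- A pair `(a, b)` is a good pair with respect to `c`. -/
def GoodPair (c a b : ℝ) : Prop :=
  a < b ∧ c * a + Real.exp (-a^2/2) = c * b + Real.exp (-b^2/2) ∧
    0 < c - a * Real.exp (-a^2/2) ∧ c - b * Real.exp (-b^2/2) ≤ 0

noncomputable def fE (t : ℝ) : ℝ := Real.exp (-t^2/2)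
noncomputable def gE (t : ℝ) : ℝ := t * Real.exp (-t^2/2)

lemma fE_hasDerivAt (t : ℝ) : HasDerivAt fE (-gE t) t := by
  have h1 : HasDerivAt (fun x : ℝ => -x^2/2) (-t) t := by
    have h := ((hasDerivAt_pow 2 t).neg).div_const 2
    refine h.congr_deriv ?_
    norm_num
    ring
  have h2 := (Real.hasDerivAt_exp (-t^2/2)).comp t h1
  have : -gE t = Real.exp (-t^2/2) * -t := by simp [gE]; ring
  rw [this]
  exact h2

lemma gE_hasDerivAt (t : ℝ) : HasDerivAt gE ((1 - t^2) * Real.exp (-t^2/2)) t := by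
  have h := (hasDerivAt_id t).mul (fE_hasDerivAt t)
  have h2 : (1 - t^2) * Real.exp (-t^2/2) = 1 * fE t + id t * -gE t := by
    simp [fE, gE]; ring
  rw [h2]
  exact h

lemma gE_lt (t : ℝ) (ht : t ≠ 1) : gE t < Real.exp (-1/2) := by
  rcases le_or_gt t 0 with h | h
  · have : gE t ≤ 0 := mul_nonpos_of_nonpos_of_nonneg h (Real.exp_pos _).le
    linarith [Real.exp_pos (-1/2 : ℝ)]
  · have hne : (t^2 - 1)/2 ≠ 0 := by
      intro hc
      have : t = 1 := by nlinarith
      exact ht this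
    have key : t < Real.exp ((t^2 - 1)/2) := by
      have := Real.add_one_lt_exp hne
      nlinarith [sq_nonneg (t-1)]
    calc gE t = t * Real.exp (-t^2/2) := rfl
      _ < Real.exp ((t^2-1)/2) * Real.exp (-t^2/2) :=
          mul_lt_mul_of_pos_right key (Real.exp_pos _)
      _ = Real.exp (-1/2) := by rw [← Real.exp_add]; congr 1; ring
lemma gE_strictMonoOn : StrictMonoOn gE (Set.Icc (0:ℝ) 1) := by
  apply strictMonoOn_of_deriv_pos (convex_Icc _ _)
  · exact fun x _ => (gE_hasDerivAt x).continuousAt.continuousWithinAt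
  · intro x hx
    rw [interior_Icc] at hx
    rw [(gE_hasDerivAt x).deriv]
    have h1 : 0 < 1 - x^2 := by nlinarith [hx.1, hx.2]
    positivity

lemma gE_antitoneOn : AntitoneOn gE (Set.Ici (1:ℝ)) := by
  apply antitoneOn_of_deriv_nonpos (convex_Ici _)
  · exact fun x _ => (gE_hasDerivAt x).continuousAt.continuousWithinAt
  · exact fun x _ => (gE_hasDerivAt x).differentiableAt.differentiableWithinAt
  · intro x hx
    rw [interior_Ici] at hx
    rw [(gE_hasDerivAt x).deriv]
    have h1 : 1 - x^2 ≤ 0 := by nlinarith [Set.mem_Ioi.mp hx]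
    exact mul_nonpos_of_nonpos_of_nonneg h1 (Real.exp_pos _).le

noncomputable def GG (h₀ s : ℝ) : ℝ := fE h₀ - fE (h₀ + s) - s * gE h₀
noncomputable def HH (h₀ s : ℝ) : ℝ := s * gE (h₀ + s) - fE h₀ + fE (h₀ + s)

lemma fE_comp_hasDerivAt (h₀ s : ℝ) :
    HasDerivAt (fun x : ℝ => fE (h₀ + x)) (-gE (h₀ + s)) s := by
  have h := (fE_hasDerivAt (h₀ + s)).comp s ((hasDerivAt_id s).const_add h₀)
  simpa [Function.comp_def] using h

lemma gE_comp_hasDerivAt (h₀ s : ℝ) :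
    HasDerivAt (fun x : ℝ => gE (h₀ + x)) ((1 - (h₀+s)^2) * Real.exp (-(h₀+s)^2/2)) s := by
  have h := (gE_hasDerivAt (h₀ + s)).comp s ((hasDerivAt_id s).const_add h₀)
  simpa [Function.comp_def] using h

lemma GG_hasDerivAt (h₀ s : ℝ) : HasDerivAt (GG h₀) (gE (h₀ + s) - gE h₀) s := by
  have h := ((hasDerivAt_const s (fE h₀)).sub (fE_comp_hasDerivAt h₀ s)).sub
    ((hasDerivAt_id s).mul_const (gE h₀))
  have h2 : gE (h₀ + s) - gE h₀ = 0 - -gE (h₀ + s) - 1 * gE h₀ := by ring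
  rw [h2]
  exact h

lemma HH_hasDerivAt (h₀ s : ℝ) :
    HasDerivAt (HH h₀) (s * ((1 - (h₀+s)^2) * Real.exp (-(h₀+s)^2/2))) s := by
  have h := (((hasDerivAt_id s).mul (gE_comp_hasDerivAt h₀ s)).sub
    (hasDerivAt_const s (fE h₀))).add (fE_comp_hasDerivAt h₀ s)
  have h2 : s * ((1 - (h₀+s)^2) * Real.exp (-(h₀+s)^2/2)) =
      1 * gE (h₀ + s) + id s * ((1 - (h₀+s)^2) * Real.exp (-(h₀+s)^2/2)) - 0 + -gE (h₀ + s) := by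
    simp only [id_eq]; ring
  rw [h2]
  exact h

theorem stmt14 (h₀ : ℝ) (hh₀ : h₀ ∈ Set.Ico (0:ℝ) 1)
    (rstar cstar : ℝ) (hr : 0 < rstar)
    (hcs : cstar ∈ Set.Ioo 0 (Real.exp (-1/2)))
    (hgp : GoodPair cstar h₀ (h₀ + rstar)) :
    ∀ r : ℝ, 0 < r → r < rstar →
      ∃ c ∈ Set.Ioo (0:ℝ) (Real.exp (-1/2)), GoodPair c h₀ (h₀ + r) := by
  obtain ⟨h0nn, h01⟩ := hh₀
  intro r hr0 hrr
  have hcval : cstar * rstar = fE h₀ - fE (h₀ + rstar) := by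
    have h := hgp.2.1
    simp only [fE]
    linear_combination -h
  have hgp1 : 0 < cstar - gE h₀ := by
    have := hgp.2.2.1
    simp only [gE]
    linarith
  have hgp2 : cstar ≤ gE (h₀ + rstar) := by
    have := hgp.2.2.2
    simp only [gE]
    linarith
  have hGstar : 0 < GG h₀ rstar := by
    have heq : GG h₀ rstar = rstar * (cstar - gE h₀) := by
      simp only [GG]; linear_combination -hcval
    rw [heq]; exact mul_pos hr hgp1
  have hHstar : 0 ≤ HH h₀ rstar := by
    have heq : HH h₀ rstar = rstar * (gE (h₀ + rstar) - cstar) := by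
      simp only [HH]; linear_combination hcval
    rw [heq]; exact mul_nonneg hr.le (by linarith)
  -- Claim A
  have hA : 0 < GG h₀ r := by
    rcases le_or_gt (gE h₀) (gE (h₀ + r)) with hcase | hcase
    · set s₀ := min r (1 - h₀) with hs₀
      have hs₀pos : 0 < s₀ := lt_min hr0 (by linarith)
      have hs₀r : s₀ ≤ r := min_le_left _ _
      have hs₀1 : h₀ + s₀ ≤ 1 := by have := min_le_right r (1 - h₀); linarith
      have hmono1 : StrictMonoOn (GG h₀) (Set.Icc 0 s₀) := by
        apply strictMonoOn_of_deriv_pos (convex_Icc _ _)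
        · exact fun x _ => (GG_hasDerivAt h₀ x).continuousAt.continuousWithinAt
        · intro x hx
          rw [interior_Icc] at hx
          rw [(GG_hasDerivAt h₀ x).deriv]
          have := gE_strictMonoOn (show h₀ ∈ Set.Icc (0:ℝ) 1 from ⟨h0nn, h01.le⟩)
            (show h₀ + x ∈ Set.Icc (0:ℝ) 1 from ⟨by linarith [hx.1], by linarith [hx.2]⟩)
            (show h₀ < h₀ + x by linarith [hx.1])
          linarith
      have h1 : 0 < GG h₀ s₀ := by
        have := hmono1 ⟨le_refl 0, hs₀pos.le⟩ ⟨hs₀pos.le, le_refl s₀⟩ hs₀pos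
        have h0 : GG h₀ 0 = 0 := by simp [GG]
        linarith
      have hmono2 : MonotoneOn (GG h₀) (Set.Icc s₀ r) := by
        apply monotoneOn_of_deriv_nonneg (convex_Icc _ _)
        · exact fun x _ => (GG_hasDerivAt h₀ x).continuousAt.continuousWithinAt
        · exact fun x _ => (GG_hasDerivAt h₀ x).differentiableAt.differentiableWithinAt
        · intro x hx
          rw [interior_Icc] at hx
          rw [(GG_hasDerivAt h₀ x).deriv]
          rcases le_or_gt (h₀ + x) 1 with h1x | h1x
          · have := gE_strictMonoOn.monotoneOn (show h₀ ∈ Set.Icc (0:ℝ) 1 from ⟨h0nn, h01.le⟩)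
              (show h₀ + x ∈ Set.Icc (0:ℝ) 1 from ⟨by linarith [hx.1], h1x⟩)
              (show h₀ ≤ h₀ + x by linarith [hx.1])
            linarith
          · have := gE_antitoneOn (show h₀ + x ∈ Set.Ici (1:ℝ) from h1x.le)
              (show h₀ + r ∈ Set.Ici (1:ℝ) from by simp; linarith [hx.2])
              (show h₀ + x ≤ h₀ + r by linarith [hx.2])
            linarith
      have := hmono2 ⟨le_refl s₀, hs₀r⟩ ⟨hs₀r, le_refl r⟩ hs₀r
      linarith
    · have h1r : 1 < h₀ + r := by
        by_contra hcon
        push_neg at hcon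
        have := gE_strictMonoOn.monotoneOn (show h₀ ∈ Set.Icc (0:ℝ) 1 from ⟨h0nn, h01.le⟩)
          (show h₀ + r ∈ Set.Icc (0:ℝ) 1 from ⟨by linarith, hcon⟩)
          (show h₀ ≤ h₀ + r by linarith)
        linarith
      have hanti : AntitoneOn (GG h₀) (Set.Icc r rstar) := by
        apply antitoneOn_of_deriv_nonpos (convex_Icc _ _)
        · exact fun x _ => (GG_hasDerivAt h₀ x).continuousAt.continuousWithinAt
        · exact fun x _ => (GG_hasDerivAt h₀ x).differentiableAt.differentiableWithinAt
        · intro x hx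
          rw [interior_Icc] at hx
          rw [(GG_hasDerivAt h₀ x).deriv]
          have := gE_antitoneOn (show h₀ + r ∈ Set.Ici (1:ℝ) from h1r.le)
            (show h₀ + x ∈ Set.Ici (1:ℝ) from by simp; linarith [hx.1])
            (show h₀ + r ≤ h₀ + x by linarith [hx.1])
          linarith
      have := hanti ⟨le_refl r, hrr.le⟩ ⟨hrr.le, le_refl rstar⟩ hrr.le
      linarith
  -- Claim B
  have hB : 0 ≤ HH h₀ r := by
    rcases le_or_gt (h₀ + r) 1 with hcase | hcase
    · have hmono : MonotoneOn (HH h₀) (Set.Icc 0 r) := by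
        apply monotoneOn_of_deriv_nonneg (convex_Icc _ _)
        · exact fun x _ => (HH_hasDerivAt h₀ x).continuousAt.continuousWithinAt
        · exact fun x _ => (HH_hasDerivAt h₀ x).differentiableAt.differentiableWithinAt
        · intro x hx
          rw [interior_Icc] at hx
          rw [(HH_hasDerivAt h₀ x).deriv]
          have h1 : 0 ≤ 1 - (h₀ + x)^2 := by nlinarith [hx.1, hx.2]
          have := Real.exp_pos (-(h₀ + x)^2/2)
          have hx0 : (0:ℝ) ≤ x := hx.1.le
          positivity
      have := hmono ⟨le_refl 0, hr0.le⟩ ⟨hr0.le, le_refl r⟩ hr0.le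
      have h0 : HH h₀ 0 = 0 := by simp [HH]
      linarith
    · have hanti : AntitoneOn (HH h₀) (Set.Icc r rstar) := by
        apply antitoneOn_of_deriv_nonpos (convex_Icc _ _)
        · exact fun x _ => (HH_hasDerivAt h₀ x).continuousAt.continuousWithinAt
        · exact fun x _ => (HH_hasDerivAt h₀ x).differentiableAt.differentiableWithinAt
        · intro x hx
          rw [interior_Icc] at hx
          rw [(HH_hasDerivAt h₀ x).deriv]
          have h1 : 1 - (h₀ + x)^2 ≤ 0 := by nlinarith [hx.1]
          have h2 : (0:ℝ) ≤ x := by linarith [hx.1]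
          exact mul_nonpos_of_nonneg_of_nonpos h2
            (mul_nonpos_of_nonpos_of_nonneg h1 (Real.exp_pos _).le)
      have := hanti ⟨le_refl r, hrr.le⟩ ⟨hrr.le, le_refl rstar⟩ hrr.le
      linarith
  -- assemble
  have hflt : fE (h₀ + r) < fE h₀ := by
    simp only [fE]
    apply Real.exp_lt_exp.mpr
    nlinarith
  have hcpos : 0 < (fE h₀ - fE (h₀ + r)) / r := div_pos (by linarith) hr0
  have hcgh : gE h₀ < (fE h₀ - fE (h₀ + r)) / r := by
    rw [lt_div_iff₀ hr0]
    have : GG h₀ r = fE h₀ - fE (h₀ + r) - r * gE h₀ := rfl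
    nlinarith
  have hcgb : (fE h₀ - fE (h₀ + r)) / r ≤ gE (h₀ + r) := by
    rw [div_le_iff₀ hr0]
    have : HH h₀ r = r * gE (h₀ + r) - fE h₀ + fE (h₀ + r) := rfl
    nlinarith
  have hclt : (fE h₀ - fE (h₀ + r)) / r < Real.exp (-1/2) := by
    rcases eq_or_ne (h₀ + r) 1 with h1 | h1
    · have hd : ∀ x : ℝ, HasDerivAt (fun t => Real.exp (-1/2) * t + fE t)
          (Real.exp (-1/2) + -gE x) x := by
        intro x
        have := ((hasDerivAt_id x).const_mul (Real.exp (-1/2))).add (fE_hasDerivAt x)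
        simpa [Pi.add_def] using this
      have hF : StrictMonoOn (fun t => Real.exp (-1/2) * t + fE t)
          (Set.Icc h₀ (h₀ + r)) := by
        apply strictMonoOn_of_deriv_pos (convex_Icc _ _)
        · exact fun x _ => (hd x).continuousAt.continuousWithinAt
        · intro x hx
          rw [interior_Icc] at hx
          rw [(hd x).deriv]
          have hxne : x ≠ 1 := by rw [← h1]; exact ne_of_lt hx.2
          have := gE_lt x hxne
          linarith
      have := hF ⟨le_refl h₀, by linarith⟩ ⟨by linarith, le_refl _⟩ (by linarith)
      rw [div_lt_iff₀ hr0]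
      simp only at this
      nlinarith
    · calc (fE h₀ - fE (h₀ + r)) / r ≤ gE (h₀ + r) := hcgb
        _ < Real.exp (-1/2) := gE_lt _ h1
  refine ⟨(fE h₀ - fE (h₀ + r)) / r, ⟨hcpos, hclt⟩, by linarith, ?_, ?_, ?_⟩
  · have hrne : r ≠ 0 := hr0.ne'
    simp only [fE]
    field_simp
    ring
  · simp only [gE, fE] at hcgh
    simp only [fE]
    linarith
  · simp only [gE, fE] at hcgb
    simp only [fE]
    linarith
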